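/- Let κ > 0 and let p, p* : ℝ → EuclideanSpace ℝ (Fin 2) be such that p* is differentiable with continuous derivative and deriv p*(t) → 0 as t → +∞, and p is differentiable with deriv p t = -κ • (p t - p* t) for all t ∈ ℝ. Then ‖p t - p* t‖ → 0 as t → +∞. -/

import Mathlib

open Filter

/-- Asymptotic tracking of the moving optimal point under proportional control. -/
theorem asymptotic_tracking
    (κ : ℝ) (hκ : 0 < κ)
    (p pstar : ℝ → EuclideanSpace ℝ (Fin 2))
    (hpstar_diff : Differentiable ℝ pstar)
    (hpstar_cont : Continuous (deriv pstar))
    (hpstar_vel : Tendsto (deriv pstar) atTop (nhds 0))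
    (hp_diff : Differentiable ℝ p)
    (hode : ∀ t : ℝ, deriv p t = -κ • (p t - pstar t)) :
    Tendsto (fun t => ‖p t - pstar t‖) atTop (nhds 0) := by
  set v := deriv pstar with hv
  set e : ℝ → EuclideanSpace ℝ (Fin 2) := fun t => p t - pstar t with he
  -- derivative of the error
  have hde : ∀ t, HasDerivAt e (-κ • e t - v t) t := by
    intro t
    have h1 := ((hp_diff t).hasDerivAt).sub ((hpstar_diff t).hasDerivAt)
    rw [hode t] at h1
    exact h1
  -- derivative of the integrating-factor expression
  have hE : ∀ t, HasDerivAt (fun s => Real.exp (κ*s) • e s) (-(Real.exp (κ*t)) • v t) t := by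
    intro t
    have hlin : HasDerivAt (fun s : ℝ => κ * s) κ t := by
      simpa using (hasDerivAt_id t).const_mul κ
    have := hlin.exp.smul (hde t)
    refine this.congr_deriv ?_
    ext i
    simp only [PiLp.add_apply, PiLp.smul_apply, PiLp.sub_apply, PiLp.neg_apply, smul_eq_mul]
    ring
  have hvcont : Continuous v := hpstar_cont
  have hgcont : Continuous (fun s : ℝ => -(Real.exp (κ*s)) • v s) :=
    ((Real.continuous_exp.comp (continuous_const.mul continuous_id)).neg).smul hvcont
  have hncont : Continuous (fun s : ℝ => Real.exp (κ*s) * ‖v s‖) :=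
    (Real.continuous_exp.comp (continuous_const.mul continuous_id)).mul hvcont.norm
  have hFTC : ∀ t : ℝ, (∫ s in (0:ℝ)..t, -(Real.exp (κ*s)) • v s)
      = Real.exp (κ*t) • e t - e 0 := by
    intro t
    have := intervalIntegral.integral_eq_sub_of_hasDerivAt
      (f := fun s => Real.exp (κ*s) • e s) (f' := fun s => -(Real.exp (κ*s)) • v s)
      (fun x _ => hE x) (hgcont.intervalIntegrable 0 t)
    simpa using this
  -- norm bound for t ≥ 0
  have hbound : ∀ t : ℝ, 0 ≤ t → ‖e t‖ ≤ Real.exp (-(κ*t)) *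
      (‖e 0‖ + ∫ s in (0:ℝ)..t, Real.exp (κ*s) * ‖v s‖) := by
    intro t ht
    have h1 : ‖Real.exp (κ*t) • e t‖ ≤ ‖e 0‖ + ∫ s in (0:ℝ)..t, Real.exp (κ*s) * ‖v s‖ := by
      have h2 : Real.exp (κ*t) • e t = e 0 + ∫ s in (0:ℝ)..t, -(Real.exp (κ*s)) • v s := by
        rw [hFTC t]; abel
      rw [h2]
      refine (norm_add_le _ _).trans (add_le_add le_rfl ?_)
      refine (intervalIntegral.norm_integral_le_integral_norm ht).trans_eq ?_
      refine intervalIntegral.integral_congr fun s _ => ?_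
      simp [norm_smul, abs_of_pos (Real.exp_pos _)]
    have h3 : ‖e t‖ = Real.exp (-(κ*t)) * ‖Real.exp (κ*t) • e t‖ := by
      rw [norm_smul, Real.norm_eq_abs, abs_of_pos (Real.exp_pos _), ← mul_assoc,
        ← Real.exp_add]
      simp
    rw [h3]
    exact mul_le_mul_of_nonneg_left h1 (Real.exp_pos _).le
  -- final epsilon argument
  rw [NormedAddCommGroup.tendsto_nhds_zero]
  intro ε hε
  have hδ : 0 < κ * ε / 4 := by positivity
  -- T₀ past which ‖v‖ ≤ κε/4
  obtain ⟨T₀, hT₀⟩ : ∃ T₀ : ℝ, 0 ≤ T₀ ∧ ∀ s ≥ T₀, ‖v s‖ ≤ κ * ε / 4 := by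
    have := (NormedAddCommGroup.tendsto_nhds_zero.mp hpstar_vel) (κ * ε / 4) hδ
    rw [eventually_atTop] at this
    obtain ⟨T, hT⟩ := this
    exact ⟨max T 0, le_max_right _ _, fun s hs => (hT s ((le_max_left _ _).trans hs)).le⟩
  obtain ⟨hT₀0, hT₀v⟩ := hT₀
  set C : ℝ := ‖e 0‖ + ∫ s in (0:ℝ)..T₀, Real.exp (κ*s) * ‖v s‖ with hC
  -- eventually exp(-(κ t)) * C < ε / 2
  have hdecay : Tendsto (fun t : ℝ => Real.exp (-(κ*t)) * C) atTop (nhds 0) := by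
    have h1 : Tendsto (fun t : ℝ => -(κ*t)) atTop atBot := by
      have h0 : Tendsto (fun t : ℝ => κ * t) atTop atTop :=
        Tendsto.const_mul_atTop hκ tendsto_id
      exact tendsto_neg_atTop_atBot.comp h0
    simpa using (Real.tendsto_exp_atBot.comp h1).mul_const C
  have hdecay' : ∀ᶠ t : ℝ in atTop, Real.exp (-(κ*t)) * C < ε / 2 := by
    have := (NormedAddCommGroup.tendsto_nhds_zero.mp hdecay) (ε/2) (by positivity)
    filter_upwards [this] with t ht
    calc Real.exp (-(κ*t)) * C ≤ |Real.exp (-(κ*t)) * C| := le_abs_self _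
    _ < ε / 2 := by rw [abs_mul, abs_of_pos (Real.exp_pos _)]; simpa [Real.norm_eq_abs, abs_mul, abs_of_pos (Real.exp_pos (-(κ*t)))] using ht
  filter_upwards [hdecay', eventually_ge_atTop T₀] with t htd htT
  have ht0 : 0 ≤ t := hT₀0.trans htT
  -- split the integral
  have hsplit : (∫ s in (0:ℝ)..t, Real.exp (κ*s) * ‖v s‖)
      = (∫ s in (0:ℝ)..T₀, Real.exp (κ*s) * ‖v s‖) + ∫ s in T₀..t, Real.exp (κ*s) * ‖v s‖ :=
    (intervalIntegral.integral_add_adjacent_intervals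
      (hncont.intervalIntegrable 0 T₀) (hncont.intervalIntegrable T₀ t)).symm
  -- bound the tail integral
  have htail : (∫ s in T₀..t, Real.exp (κ*s) * ‖v s‖) ≤ (ε/4) * Real.exp (κ*t) := by
    have h1 : (∫ s in T₀..t, Real.exp (κ*s) * ‖v s‖)
        ≤ ∫ s in T₀..t, Real.exp (κ*s) * (κ * ε / 4) := by
      refine intervalIntegral.integral_mono_on htT (hncont.intervalIntegrable T₀ t)
        (((Real.continuous_exp.comp (continuous_const.mul continuous_id)).mul
          continuous_const).intervalIntegrable T₀ t) fun s hs => ?_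
      exact mul_le_mul_of_nonneg_left (hT₀v s hs.1) (Real.exp_pos _).le
    have h2 : (∫ s in T₀..t, Real.exp (κ*s))
        = κ⁻¹ * Real.exp (κ*t) - κ⁻¹ * Real.exp (κ*T₀) := by
      refine intervalIntegral.integral_eq_sub_of_hasDerivAt
        (f := fun s => κ⁻¹ * Real.exp (κ*s)) (f' := fun s => Real.exp (κ*s)) (fun s _ => ?_)
        ((Real.continuous_exp.comp (continuous_const.mul continuous_id)).intervalIntegrable T₀ t)
      have hlin : HasDerivAt (fun u : ℝ => κ * u) κ s := by
        simpa using (hasDerivAt_id s).const_mul κ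
      have := hlin.exp.const_mul κ⁻¹
      refine this.congr_deriv ?_
      field_simp
    calc (∫ s in T₀..t, Real.exp (κ*s) * ‖v s‖)
        ≤ ∫ s in T₀..t, Real.exp (κ*s) * (κ * ε / 4) := h1
      _ = (κ * ε / 4) * ∫ s in T₀..t, Real.exp (κ*s) := by
          rw [intervalIntegral.integral_mul_const, mul_comm]
      _ = (κ * ε / 4) * (κ⁻¹ * Real.exp (κ*t) - κ⁻¹ * Real.exp (κ*T₀)) := by rw [h2]
      _ ≤ (κ * ε / 4) * (κ⁻¹ * Real.exp (κ*t)) := by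
          refine mul_le_mul_of_nonneg_left ?_ hδ.le
          have := (Real.exp_pos (κ*T₀)).le
          nlinarith [inv_pos.mpr hκ]
      _ = (ε/4) * Real.exp (κ*t) := by field_simp
  -- put it together
  have hmain : ‖e t‖ ≤ Real.exp (-(κ*t)) * C + ε / 4 := by
    calc ‖e t‖ ≤ Real.exp (-(κ*t)) *
        (‖e 0‖ + ∫ s in (0:ℝ)..t, Real.exp (κ*s) * ‖v s‖) := hbound t ht0
      _ = Real.exp (-(κ*t)) * C + Real.exp (-(κ*t)) * ∫ s in T₀..t, Real.exp (κ*s) * ‖v s‖ := by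
          rw [hsplit, hC]; ring
      _ ≤ Real.exp (-(κ*t)) * C + Real.exp (-(κ*t)) * ((ε/4) * Real.exp (κ*t)) := by
          exact add_le_add le_rfl (mul_le_mul_of_nonneg_left htail (Real.exp_pos _).le)
      _ = Real.exp (-(κ*t)) * C + ε / 4 := by
          rw [show Real.exp (-(κ*t)) * ((ε/4) * Real.exp (κ*t))
              = (ε/4) * (Real.exp (-(κ*t)) * Real.exp (κ*t)) by ring, ← Real.exp_add]
          simp
  have : ‖e t‖ < ε := by linarith
  simpa [Real.norm_eq_abs, abs_of_nonneg (norm_nonneg (e t))] using this
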